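/- Let k be a field and R a commutative graded k-algebra with grading 𝒜 : ℕ → Submodule k R, 𝒜 0 = k·1, and suppose R is a Hilbert–Serre ring with Hilbert–Serre dimension d = d(R). Then for every finite-dimensional k-subspace V ⊆ R there exist a constant C > 0 and N ∈ ℕ such that for all n ≥ N, dim_k(k·1 + V + V² + ⋯ + Vⁿ) ≤ C·n^d, where V^i denotes the k-span of all products of i elements of V. Consequently, the Gelfand–Kirillov dimension of R over k, defined as GKdim_k(R) = sup_V limsup_{n→∞} log(dim_k(k·1 + V + ⋯ + Vⁿ))/log(n) with the supremum over all finite-dimensional k-subspaces V of R, satisfies GKdim_k(R) ≤ d(R). -/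

import Mathlib

/-- The boundedness condition defining Hilbert–Serre rings: for all `t ∈ (0,1)` the
Poincaré series `∑ F n * tⁿ` converges and `(1 - t) ^ d` times its sum is bounded by a
uniform constant `C > 0`. -/
def HSBound (F : ℕ → ℕ) (d : ℕ) : Prop :=
  ∃ C : ℝ, 0 < C ∧ ∀ t : ℝ, t ∈ Set.Ioo (0 : ℝ) 1 →
    Summable (fun n => (F n : ℝ) * t ^ n) ∧
      (1 - t) ^ d * (∑' n, (F n : ℝ) * t ^ n) ≤ C

/-- A graded algebra with grading `𝒜` is a *Hilbert–Serre ring* if every graded component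
is finite dimensional over `k` and the Poincaré series `∑ dim_k (𝒜 n) tⁿ` satisfies the
boundedness condition `HSBound` for some `d`. -/
def IsHilbertSerre {k R : Type*} [Field k] [CommRing R] [Algebra k R]
    (𝒜 : ℕ → Submodule k R) : Prop :=
  (∀ n, FiniteDimensional k (𝒜 n)) ∧
    ∃ d, HSBound (fun n => Module.finrank k (𝒜 n)) d

/-- The Hilbert–Serre dimension `d(R)`: the least `d` such that `(1-t)^d P_R(t)` is
bounded on `(0,1)`. -/
noncomputable def hsDim {k R : Type*} [Field k] [CommRing R] [Algebra k R]
    (𝒜 : ℕ → Submodule k R) : ℕ :=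
  sInf {d | HSBound (fun n => Module.finrank k (𝒜 n)) d}


/-- For a finite-dimensional subspace `V` of a `k`-algebra `R`, `gkGrowth V n` is
`dim_k (k·1 + V + V² + ⋯ + Vⁿ)`, where `Vⁱ` is the span of products of `i` elements
of `V` (so `V⁰ = k·1`). -/
noncomputable def gkGrowth {k R : Type*} [Field k] [CommRing R] [Algebra k R]
    (V : Submodule k R) (n : ℕ) : ℕ :=
  Module.finrank k ↥(∑ i ∈ Finset.range (n + 1), V ^ i)

section Aux

variable {k R : Type*} [Field k] [CommRing R] [Algebra k R]

set_option linter.unusedSectionVars false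

lemma aux_sum_le {ι : Type*} (s : Finset ι) (p : ι → Submodule k R) (q : Submodule k R)
    (h : ∀ i ∈ s, p i ≤ q) : ∑ i ∈ s, p i ≤ q := by
  induction s using Finset.cons_induction with
  | empty => simp
  | cons i s hi ih =>
      rw [Finset.sum_cons, Submodule.add_eq_sup]
      exact sup_le (h i (Finset.mem_cons_self i s)) (ih fun j hj => h j (Finset.mem_cons_of_mem hj))

lemma aux_le_sum {ι : Type*} (s : Finset ι) (p : ι → Submodule k R) {j : ι} (hj : j ∈ s) :
    p j ≤ ∑ i ∈ s, p i := by
  classical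
  induction s using Finset.cons_induction with
  | empty => simp at hj
  | cons i s hi ih =>
      rw [Finset.sum_cons, Submodule.add_eq_sup]
      rcases Finset.mem_cons.mp hj with h | h
      · exact h ▸ le_sup_left
      · exact (ih h).trans le_sup_right

lemma aux_fd_sum {ι : Type*} (s : Finset ι) (p : ι → Submodule k R)
    (h : ∀ i ∈ s, FiniteDimensional k (p i)) :
    FiniteDimensional k ↥(∑ i ∈ s, p i) ∧
      Module.finrank k ↥(∑ i ∈ s, p i) ≤ ∑ i ∈ s, Module.finrank k (p i) := by
  classical
  induction s using Finset.cons_induction with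
  | empty =>
      refine ⟨?_, ?_⟩
      · rw [Finset.sum_empty]
        exact (inferInstance : FiniteDimensional k (⊥ : Submodule k R))
      · rw [Finset.sum_empty, Finset.sum_empty]
        exact (finrank_bot k R).le
  | cons i s hi ih =>
      obtain ⟨hfd, hle⟩ := ih (fun j hj => h j (Finset.mem_cons_of_mem hj))
      have h1 : FiniteDimensional k (p i) := h i (Finset.mem_cons_self i s)
      rw [Finset.sum_cons, Submodule.add_eq_sup]
      have hfd' : FiniteDimensional k ↥(p i ⊔ ∑ j ∈ s, p j) := Submodule.finiteDimensional_sup _ _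
      refine ⟨hfd', ?_⟩
      rw [Finset.sum_cons]
      exact (Submodule.finrank_add_le_finrank_add_finrank _ _).trans (by omega)

lemma aux_partial_sum_bound {F : ℕ → ℕ} {d : ℕ} (h : HSBound F d) :
    ∃ C : ℝ, 0 < C ∧ ∀ N : ℕ, 1 ≤ N →
      (∑ i ∈ Finset.range (N + 1), (F i : ℝ)) ≤ C * (N : ℝ) ^ d := by
  obtain ⟨C, hC, hb⟩ := h
  refine ⟨2 * C * 2 ^ d, by positivity, ?_⟩
  intro N hN
  have hN0 : (0 : ℝ) < N := by exact_mod_cast hN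
  set x : ℝ := 1 / (2 * N) with hx
  have hx0 : 0 < x := by positivity
  have hxle : x ≤ 1 / 2 := by
    have hN1 : (1 : ℝ) ≤ N := by exact_mod_cast hN
    rw [hx]
    rw [div_le_div_iff₀ (by positivity) (by norm_num)]
    nlinarith
  set t : ℝ := 1 - x with htdef
  have ht : t ∈ Set.Ioo (0 : ℝ) 1 :=
    ⟨by simp only [htdef]; linarith, by simp only [htdef]; linarith⟩
  obtain ⟨hsum, hle⟩ := hb t ht
  have htN : (1 : ℝ) / 2 ≤ t ^ N := by
    have hber := one_add_mul_le_pow (a := -x) (by linarith) N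
    have hxx : 1 + (N : ℝ) * (-x) = 1 / 2 := by
      rw [hx]; field_simp; ring
    rw [hxx] at hber
    simpa [htdef, sub_eq_add_neg] using hber
  have hsumnn : (0 : ℝ) ≤ ∑ i ∈ Finset.range (N + 1), (F i : ℝ) :=
    Finset.sum_nonneg fun i _ => by positivity
  have key1 : (∑ i ∈ Finset.range (N + 1), (F i : ℝ)) * t ^ N ≤
      ∑ i ∈ Finset.range (N + 1), (F i : ℝ) * t ^ i := by
    rw [Finset.sum_mul]
    refine Finset.sum_le_sum fun i hi => ?_
    exact mul_le_mul_of_nonneg_left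
      (pow_le_pow_of_le_one ht.1.le ht.2.le (Nat.lt_succ_iff.mp (Finset.mem_range.mp hi)))
      (Nat.cast_nonneg _)
  have key2 : ∑ i ∈ Finset.range (N + 1), (F i : ℝ) * t ^ i ≤ ∑' n, (F n : ℝ) * t ^ n :=
    Summable.sum_le_tsum _ (fun i _ => mul_nonneg (Nat.cast_nonneg _) (pow_nonneg ht.1.le _)) hsum
  have h1t : 1 - t = x := by rw [htdef]; ring
  have hpow : (0 : ℝ) < (1 - t) ^ d := by rw [h1t]; positivity
  have key3 : (∑' n, (F n : ℝ) * t ^ n) ≤ C * (2 * N) ^ d := by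
    have hdiv := (le_div_iff₀' hpow).mpr hle
    calc (∑' n, (F n : ℝ) * t ^ n) ≤ C / (1 - t) ^ d := hdiv
      _ = C * (2 * N) ^ d := by
          rw [h1t, hx, div_pow, one_pow, div_div_eq_mul_div, div_one]
  have final : (∑ i ∈ Finset.range (N + 1), (F i : ℝ)) * (1 / 2) ≤ C * (2 * N) ^ d :=
    (mul_le_mul_of_nonneg_left htN hsumnn).trans (key1.trans (key2.trans key3))
  calc (∑ i ∈ Finset.range (N + 1), (F i : ℝ))
      = 2 * ((∑ i ∈ Finset.range (N + 1), (F i : ℝ)) * (1 / 2)) := by ring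
    _ ≤ 2 * (C * (2 * N) ^ d) := by linarith
    _ = 2 * C * 2 ^ d * (N : ℝ) ^ d := by rw [mul_pow]; ring

variable (𝒜 : ℕ → Submodule k R) [GradedAlgebra 𝒜]

lemma W_mono {m m' : ℕ} (h : m ≤ m') :
    ∑ i ∈ Finset.range (m + 1), 𝒜 i ≤ ∑ i ∈ Finset.range (m' + 1), 𝒜 i :=
  aux_sum_le _ _ _ fun i hi =>
    aux_le_sum _ _ (Finset.mem_range.mpr (lt_of_lt_of_le (Finset.mem_range.mp hi) (by omega)))

lemma W_mul (m m' : ℕ) :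
    (∑ i ∈ Finset.range (m + 1), 𝒜 i) * (∑ i ∈ Finset.range (m' + 1), 𝒜 i) ≤
      ∑ i ∈ Finset.range (m + m' + 1), 𝒜 i := by
  rw [Finset.sum_mul_sum]
  refine aux_sum_le _ _ _ fun i hi => aux_sum_le _ _ _ fun j hj => ?_
  refine le_trans (Submodule.mul_le.mpr fun a ha b hb => SetLike.mul_mem_graded ha hb) ?_
  exact aux_le_sum _ _ (Finset.mem_range.mpr (by
    have := Finset.mem_range.mp hi; have := Finset.mem_range.mp hj; omega))

lemma mem_W (r : R) : ∃ m, r ∈ ∑ i ∈ Finset.range (m + 1), 𝒜 i := by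
  classical
  set m := (DirectSum.decompose 𝒜 r).support.sup id with hm
  refine ⟨m, ?_⟩
  have key : (∑ i ∈ (DirectSum.decompose 𝒜 r).support, ((DirectSum.decompose 𝒜 r i : R))) ∈
      ∑ i ∈ Finset.range (m + 1), 𝒜 i :=
    Submodule.sum_mem _ fun i hi => aux_le_sum _ _ (Finset.mem_range.mpr
      (Nat.lt_succ_of_le (Finset.le_sup (f := id) hi))) (DirectSum.decompose 𝒜 r i).2
  rwa [DirectSum.sum_support_decompose 𝒜 r] at key

lemma V_le_W (V : Submodule k R) (hV : FiniteDimensional k V) :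
    ∃ m, V ≤ ∑ i ∈ Finset.range (m + 1), 𝒜 i := by
  classical
  obtain ⟨s, hs⟩ := (Submodule.fg_iff_finiteDimensional V).mpr hV
  rw [← hs]
  clear hs hV
  induction s using Finset.cons_induction with
  | empty => exact ⟨0, by simp⟩
  | cons a s ha ih =>
      obtain ⟨m₁, hm₁⟩ := ih
      obtain ⟨m₂, hm₂⟩ := mem_W 𝒜 a
      refine ⟨max m₁ m₂, ?_⟩
      rw [Finset.coe_cons, Submodule.span_insert]
      refine sup_le ?_ (hm₁.trans (W_mono 𝒜 (le_max_left _ _)))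
      rw [Submodule.span_singleton_le_iff_mem]
      exact W_mono 𝒜 (le_max_right m₁ m₂) hm₂

end Aux

/-- for a Hilbert–Serre ring `R` with `d = d(R)`, the growth function
of every finite-dimensional subspace `V` is eventually bounded by `C · n^d`, and
consequently the Gelfand–Kirillov dimension
`sup_V limsup_n log(d_V(n))/log(n)` is at most `d(R)`. -/
theorem gkDim_le_hsDim {k R : Type*} [Field k] [CommRing R] [Algebra k R]
    (𝒜 : ℕ → Submodule k R) [GradedAlgebra 𝒜] (h0 : 𝒜 0 = 1)
    (hHS : IsHilbertSerre 𝒜) :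
    (∀ V : Submodule k R, FiniteDimensional k V →
      ∃ C : ℝ, 0 < C ∧ ∃ N : ℕ, ∀ n ≥ N,
        (gkGrowth V n : ℝ) ≤ C * (n : ℝ) ^ (hsDim 𝒜)) ∧
    (⨆ V : {V : Submodule k R // FiniteDimensional k ↥V},
        Filter.limsup
          (fun n : ℕ =>
            ((Real.log (gkGrowth V.1 n) / Real.log n : ℝ) : EReal))
          Filter.atTop) ≤ (hsDim 𝒜 : EReal) := by
  classical
  obtain ⟨hfd, hex⟩ := hHS
  set d := hsDim 𝒜 with hd
  have hdmem : HSBound (fun n => Module.finrank k (𝒜 n)) d := Nat.sInf_mem hex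
  obtain ⟨C₀, hC₀, hpartial⟩ := aux_partial_sum_bound hdmem
  have part1 : ∀ V : Submodule k R, FiniteDimensional k V →
      ∃ C : ℝ, 0 < C ∧ ∃ N : ℕ, ∀ n ≥ N,
        (gkGrowth V n : ℝ) ≤ C * (n : ℝ) ^ d := by
    intro V hV
    obtain ⟨m₀, hm₀⟩ := V_le_W 𝒜 V hV
    set m := m₀ + 1 with hmdef
    have hm : V ≤ ∑ i ∈ Finset.range (m + 1), 𝒜 i := hm₀.trans (W_mono 𝒜 (Nat.le_succ _))
    have hpow : ∀ i : ℕ, V ^ i ≤ ∑ j ∈ Finset.range (m * i + 1), 𝒜 j := by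
      intro i
      induction i with
      | zero =>
          rw [pow_zero, Nat.mul_zero]
          rw [Finset.sum_range_one, h0]
      | succ i ih =>
          rw [pow_succ]
          calc V ^ i * V ≤ (∑ j ∈ Finset.range (m * i + 1), 𝒜 j) *
                ∑ j ∈ Finset.range (m + 1), 𝒜 j := mul_le_mul' ih hm
            _ ≤ ∑ j ∈ Finset.range (m * i + m + 1), 𝒜 j := W_mul 𝒜 _ _
            _ = ∑ j ∈ Finset.range (m * (i + 1) + 1), 𝒜 j := by ring_nf
    have hsub : ∀ n : ℕ, (∑ i ∈ Finset.range (n + 1), V ^ i) ≤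
        ∑ j ∈ Finset.range (m * n + 1), 𝒜 j := fun n =>
      aux_sum_le _ _ _ fun i hi =>
        (hpow i).trans (W_mono 𝒜 (Nat.mul_le_mul_left m (Nat.lt_succ_iff.mp
          (Finset.mem_range.mp hi))))
    refine ⟨C₀ * m ^ d, by positivity, 1, fun n hn => ?_⟩
    obtain ⟨hWfd, hWrank⟩ := aux_fd_sum (Finset.range (m * n + 1)) 𝒜 (fun i _ => hfd i)
    have h1 : gkGrowth V n ≤ Module.finrank k ↥(∑ j ∈ Finset.range (m * n + 1), 𝒜 j) :=
      Submodule.finrank_mono (hsub n)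
    have h2 : (gkGrowth V n : ℝ) ≤ ∑ i ∈ Finset.range (m * n + 1), (Module.finrank k (𝒜 i) : ℝ) := by
      rw [← Nat.cast_sum]
      exact_mod_cast h1.trans hWrank
    have h3 := hpartial (m * n) (Nat.one_le_iff_ne_zero.mpr (Nat.mul_ne_zero (by omega) (by omega)))
    calc (gkGrowth V n : ℝ) ≤ ∑ i ∈ Finset.range (m * n + 1), (Module.finrank k (𝒜 i) : ℝ) := h2
      _ ≤ C₀ * ((m * n : ℕ) : ℝ) ^ d := h3
      _ = C₀ * m ^ d * (n : ℝ) ^ d := by push_cast; rw [mul_pow]; ring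
  refine ⟨part1, iSup_le fun V => ?_⟩
  obtain ⟨C, hC, N, hCN⟩ := part1 V.1 V.2
  set C₁ := max C 1 with hC₁def
  have hC₁ : (1 : ℝ) ≤ C₁ := le_max_right _ _
  have hlogC₁ : 0 ≤ Real.log C₁ := Real.log_nonneg hC₁
  set g : ℕ → EReal := fun n => ((Real.log C₁ / Real.log n + d : ℝ) : EReal) with hg
  have hev : (fun n : ℕ => ((Real.log (gkGrowth V.1 n) / Real.log n : ℝ) : EReal)) ≤ᶠ[Filter.atTop] g := by
    filter_upwards [Filter.eventually_ge_atTop (max N 2)] with n hn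
    have hnN : N ≤ n := le_trans (le_max_left _ _) hn
    have hn2 : 2 ≤ n := le_trans (le_max_right _ _) hn
    have hn1 : (1 : ℝ) < n := by exact_mod_cast lt_of_lt_of_le one_lt_two (by exact_mod_cast hn2)
    have hlogn : 0 < Real.log n := Real.log_pos hn1
    have hgk : (gkGrowth V.1 n : ℝ) ≤ C₁ * (n : ℝ) ^ d :=
      (hCN n hnN).trans (mul_le_mul_of_nonneg_right (le_max_left _ _) (by positivity))
    have hlog : Real.log (gkGrowth V.1 n) ≤ Real.log C₁ + d * Real.log n := by
      rcases Nat.eq_zero_or_pos (gkGrowth V.1 n) with h | h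
      · rw [h]
        have := mul_nonneg (Nat.cast_nonneg (α := ℝ) d) hlogn.le
        simp only [Nat.cast_zero, Real.log_zero]
        linarith
      · have h1 : (0 : ℝ) < gkGrowth V.1 n := by exact_mod_cast h
        calc Real.log (gkGrowth V.1 n) ≤ Real.log (C₁ * (n : ℝ) ^ d) :=
              Real.log_le_log h1 hgk
          _ = Real.log C₁ + d * Real.log n := by
              rw [Real.log_mul (by positivity) (by positivity), Real.log_pow]
    have hdiv : Real.log (gkGrowth V.1 n) / Real.log n ≤ Real.log C₁ / Real.log n + d := by
      have := (div_le_div_iff_of_pos_right hlogn).mpr hlog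
      rwa [add_div, mul_div_assoc, div_self hlogn.ne', mul_one] at this
    exact EReal.coe_le_coe_iff.mpr hdiv
  have hlim : Filter.Tendsto g Filter.atTop (nhds ((d : ℕ) : EReal)) := by
    have h1 : Filter.Tendsto (fun n : ℕ => Real.log n) Filter.atTop Filter.atTop :=
      Real.tendsto_log_atTop.comp tendsto_natCast_atTop_atTop
    have h2 : Filter.Tendsto (fun n : ℕ => (Real.log n)⁻¹) Filter.atTop (nhds 0) :=
      h1.inv_tendsto_atTop
    have h3 : Filter.Tendsto (fun n : ℕ => Real.log C₁ / Real.log n + (d : ℝ))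
        Filter.atTop (nhds ((d : ℝ))) := by
      have h4 := (h2.const_mul (Real.log C₁)).add_const (d : ℝ)
      rw [mul_zero, zero_add] at h4
      simpa [div_eq_mul_inv] using h4
    have : ((d : ℕ) : EReal) = ((d : ℝ) : EReal) := by norm_cast
    rw [this]
    exact EReal.tendsto_coe.mpr h3
  calc Filter.limsup (fun n : ℕ =>
        ((Real.log (gkGrowth V.1 n) / Real.log n : ℝ) : EReal)) Filter.atTop
      ≤ Filter.limsup g Filter.atTop := Filter.limsup_le_limsup hev
    _ = ((d : ℕ) : EReal) := hlim.limsup_eq
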